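/- arXiv:math/0211234 — 4 statements merged into one kernel-verified Lean document; each statement's English description precedes it below -/
import Mathlib

section
/- For each n ∈ {3, 4, 5, 6, 7}, let f_n : ℝ → ℝ be given by f_n(x) = n·arccos((cos(2π/n) + cos(α(x)/2)²)/sin(α(x)/2)²) where α(x) = π − (2π − x)/n. Then for every x ∈ [0.03, 2.33], the second derivative of f_n at x is strictly negative. -/
open Real

/-- Perimeter of a regular spherical `n`-gon of area `x` on the unit sphere. -/
noncomputable def regPerim (x n : ℝ) : ℝ :=
  n * Real.arccos ((Real.cos (2 * π / n) +
      (Real.cos ((π - (2 * π - x) / n) / 2)) ^ 2) /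
      (Real.sin ((π - (2 * π - x) / n) / 2)) ^ 2)

/-- Circumference of a circle on the unit sphere enclosing area `a`. -/
noncomputable def circPerim0 (a : ℝ) : ℝ := Real.sqrt (4 * π * a - a ^ 2)

/-- Perimeter of the regular spherical pentagon of area `π/3`. -/
noncomputable def p5 : ℝ := 5 * Real.arccos ((4 * Real.cos (2 * π / 5) + 1) / 3)

/-- Derivative at `n = 5` of `n ↦ regPerim (π/3) n`. -/
noncomputable def p5' : ℝ := deriv (fun n : ℝ => regPerim (π / 3) n) 5

/-- `B' = -∂₁ regPerim (π/3, 5)`. -/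
noncomputable def B' : ℝ := - deriv (fun x : ℝ => regPerim x 5) (π / 3)

/-- The isoperimetric functional `I(ℓ, n, t, ρ)`. -/
noncomputable def Ifun (ℓ n t ρ : ℝ) : ℝ := ℓ - t * B' + (5 - n) * p5' - ρ * p5

lemma myFacts (r y : ℝ) (hr3 : 3 ≤ r) (hy1 : 0.02 < y) (hy2 : y < 2.34) :
    0 < Real.sin ((π - (2 * π - y) / r) / 2) ∧
    0 < Real.cos ((π - (2 * π - y) / r) / 2) ∧
    0 < 2 * Real.sin ((π - (2 * π - y) / r) / 2) ^ 2 - 1 - Real.cos (2 * π / r) ∧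
    0 < 1 + Real.cos (2 * π / r) := by
  have hpi : (3.14 : ℝ) < π := by have := Real.pi_gt_d6; linarith
  have hpi2 : π < 3.15 := by have := Real.pi_lt_d2; linarith
  have hr0 : (0:ℝ) < r := by linarith
  set w : ℝ := (2 * π - y) / r with hw
  have hw0 : 0 < w := div_pos (by linarith) hr0
  have hwlt : w < 2 * π / r := by
    rw [hw]
    have h0y : 0 < y := by linarith
    gcongr
    linarith
  have h2pr : 2 * π / r ≤ 2 * π / 3 := by gcongr
  have hwpi : w < π := by
    have : 2 * π / 3 < π := by linarith
    linarith
  have hu0 : 0 < (π - w) / 2 := by linarith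
  have hupi : (π - w) / 2 < π / 2 := by linarith
  have hs : 0 < Real.sin ((π - w) / 2) :=
    Real.sin_pos_of_pos_of_lt_pi hu0 (by linarith)
  have hc : 0 < Real.cos ((π - w) / 2) :=
    Real.cos_pos_of_mem_Ioo ⟨by linarith, hupi⟩
  have hsinw : Real.sin ((π - w) / 2) = Real.cos (w / 2) := by
    rw [show (π - w) / 2 = π / 2 - w / 2 by ring, Real.sin_pi_div_two_sub]
  have hD : 2 * Real.sin ((π - w) / 2) ^ 2 - 1 - Real.cos (2 * π / r)
      = Real.cos w - Real.cos (2 * π / r) := by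
    rw [hsinw, Real.cos_sq, show 2 * (w/2) = w by ring]; ring
  have hcoslt : Real.cos (2 * π / r) < Real.cos w :=
    Real.cos_lt_cos_of_nonneg_of_le_pi hw0.le (by linarith) hwlt
  have hge : Real.cos (2 * π / 3) ≤ Real.cos (2 * π / r) :=
    Real.cos_le_cos_of_nonneg_of_le_pi (by positivity) (by linarith) h2pr
  have h23 : Real.cos (2 * π / 3) = -(1/2) := by
    rw [show 2 * π / 3 = π - π / 3 by ring, Real.cos_pi_sub, Real.cos_pi_div_three]
  exact ⟨hs, hc, by rw [hD]; linarith, by rw [h23] at hge; linarith⟩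

lemma hasDerivAt_u (r y : ℝ) (hr0 : r ≠ 0) :
    HasDerivAt (fun z : ℝ => (π - (2 * π - z) / r) / 2) (1 / (2 * r)) y := by
  have h1 : HasDerivAt (fun z : ℝ => 2 * π - z) (-1) y := by
    simpa using (hasDerivAt_id y).const_sub (2 * π)
  have h2 := ((h1.div_const r).const_sub π).div_const 2
  refine h2.congr_deriv ?_
  ring

/-- first derivative of `regPerim · r` -/
lemma hasDerivAt_regPerim (r y : ℝ) (hr3 : 3 ≤ r) (hy1 : 0.02 < y) (hy2 : y < 2.34) :
    HasDerivAt (fun z : ℝ => regPerim z r)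
      (Real.sqrt (1 + Real.cos (2 * π / r)) *
        (Real.cos ((π - (2 * π - y) / r) / 2) /
          (Real.sin ((π - (2 * π - y) / r) / 2) *
            Real.sqrt (2 * Real.sin ((π - (2 * π - y) / r) / 2) ^ 2 - 1 -
              Real.cos (2 * π / r))))) y := by
  obtain ⟨hs, hc, hDpos, h1c⟩ := myFacts r y hr3 hy1 hy2
  have hr0 : (0:ℝ) < r := by linarith
  set c : ℝ := Real.cos (2 * π / r) with hcdef
  set u : ℝ → ℝ := fun z => (π - (2 * π - z) / r) / 2 with hudef
  have hu : HasDerivAt u (1 / (2 * r)) y := hasDerivAt_u r y hr0.ne'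
  have hsin : HasDerivAt (fun z => Real.sin (u z)) (Real.cos (u y) * (1 / (2 * r))) y :=
    (Real.hasDerivAt_sin (u y)).comp y hu
  have hcos : HasDerivAt (fun z => Real.cos (u z)) (-Real.sin (u y) * (1 / (2 * r))) y :=
    (Real.hasDerivAt_cos (u y)).comp y hu
  have hs2ne : Real.sin (u y) ^ 2 ≠ 0 := by positivity
  -- g and its derivative
  set g : ℝ → ℝ := fun z => (c + Real.cos (u z) ^ 2) / Real.sin (u z) ^ 2 with hgdef
  have hgnum : HasDerivAt (fun z => c + Real.cos (u z) ^ 2)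
      ((2 : ℕ) * Real.cos (u y) ^ 1 * (-Real.sin (u y) * (1 / (2 * r)))) y :=
    (hcos.pow 2).const_add c
  have hgden : HasDerivAt (fun z => Real.sin (u z) ^ 2)
      ((2 : ℕ) * Real.sin (u y) ^ 1 * (Real.cos (u y) * (1 / (2 * r)))) y :=
    hsin.pow 2
  have hpyth : Real.sin (u y) ^ 2 + Real.cos (u y) ^ 2 = 1 := Real.sin_sq_add_cos_sq (u y)
  have hg : HasDerivAt g (-((1 + c) * Real.cos (u y)) / (r * Real.sin (u y) ^ 3)) y := by
    have := hgnum.div hgden hs2ne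
    refine this.congr_deriv ?_
    set S := Real.sin (u y) with hSdef
    set C := Real.cos (u y) with hCdef
    rw [show C ^ 2 = 1 - S ^ 2 from by linarith [hpyth]]
    field_simp
    ring
  -- bounds on g
  have hgadd : g y + 1 = (1 + c) / Real.sin (u y) ^ 2 := by
    rw [hgdef, div_add_one hs2ne]; congr 1; linarith
  have hgsub : 1 - g y = (2 * Real.sin (u y) ^ 2 - 1 - c) / Real.sin (u y) ^ 2 := by
    rw [hgdef, one_sub_div hs2ne]; congr 1; linarith [hpyth]
  have hglt : g y < 1 := by nlinarith [div_pos hDpos (by positivity : (0:ℝ) < Real.sin (u y) ^ 2)]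
  have hggt : -1 < g y := by nlinarith [div_pos h1c (by positivity : (0:ℝ) < Real.sin (u y) ^ 2)]
  have harc : HasDerivAt (fun z => Real.arccos (g z))
      (-(1 / Real.sqrt (1 - g y ^ 2)) * (-((1 + c) * Real.cos (u y)) / (r * Real.sin (u y) ^ 3))) y :=
    (Real.hasDerivAt_arccos (by linarith) (by linarith)).comp y hg
  have hmain : HasDerivAt (fun z : ℝ => regPerim z r)
      (r * (-(1 / Real.sqrt (1 - g y ^ 2)) *
        (-((1 + c) * Real.cos (u y)) / (r * Real.sin (u y) ^ 3)))) y := by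
    have := harc.const_mul r
    exact this
  -- simplify the value
  convert hmain using 1
  have hsq : 1 - g y ^ 2 = ((1 + c) * (2 * Real.sin (u y) ^ 2 - 1 - c)) / (Real.sin (u y) ^ 2) ^ 2 := by
    have : 1 - g y ^ 2 = (1 - g y) * (g y + 1) := by ring
    rw [this, hgsub, hgadd]; field_simp
  have hsqrt : Real.sqrt (1 - g y ^ 2)
      = Real.sqrt (1 + c) * Real.sqrt (2 * Real.sin (u y) ^ 2 - 1 - c) / Real.sin (u y) ^ 2 := by
    rw [hsq, Real.sqrt_div (mul_nonneg h1c.le hDpos.le), Real.sqrt_mul h1c.le,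
      Real.sqrt_sq (sq_nonneg _)]
  rw [hsqrt]
  set S := Real.sin (u y) with hSdef
  set C := Real.cos (u y) with hCdef
  set Q := Real.sqrt (2 * S ^ 2 - 1 - c) with hQdef
  set a := Real.sqrt (1 + c) with hadef
  have hQ0 : 0 < Q := Real.sqrt_pos.mpr hDpos
  have ha0 : 0 < a := Real.sqrt_pos.mpr h1c
  have ha2 : a ^ 2 = 1 + c := Real.sq_sqrt h1c.le
  rw [← ha2]
  field_simp

lemma second_deriv_neg (r x : ℝ) (hr3 : 3 ≤ r) (hx1 : 0.02 < x) (hx2 : x < 2.34) :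
    deriv (deriv (fun y : ℝ => regPerim y r)) x < 0 := by
  obtain ⟨hs, hc, hDpos, h1c⟩ := myFacts r x hr3 hx1 hx2
  have hr0 : (0:ℝ) < r := by linarith
  set c : ℝ := Real.cos (2 * π / r) with hcdef
  set u : ℝ → ℝ := fun z => (π - (2 * π - z) / r) / 2 with hudef
  set F : ℝ → ℝ := fun z => Real.sqrt (1 + c) *
    (Real.cos (u z) / (Real.sin (u z) * Real.sqrt (2 * Real.sin (u z) ^ 2 - 1 - c))) with hFdef
  have hev : deriv (fun y : ℝ => regPerim y r) =ᶠ[nhds x] F := by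
    filter_upwards [Ioo_mem_nhds hx1 hx2] with z hz
    exact (hasDerivAt_regPerim r z hr3 hz.1 hz.2).deriv
  rw [hev.deriv_eq]
  have hu : HasDerivAt u (1 / (2 * r)) x := hasDerivAt_u r x hr0.ne'
  have hsin : HasDerivAt (fun z => Real.sin (u z)) (Real.cos (u x) * (1 / (2 * r))) x :=
    (Real.hasDerivAt_sin (u x)).comp x hu
  have hcos : HasDerivAt (fun z => Real.cos (u z)) (-Real.sin (u x) * (1 / (2 * r))) x :=
    (Real.hasDerivAt_cos (u x)).comp x hu
  have hD : HasDerivAt (fun z => 2 * Real.sin (u z) ^ 2 - 1 - c)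
      (2 * ((2 : ℕ) * Real.sin (u x) ^ 1 * (Real.cos (u x) * (1 / (2 * r))))) x :=
    (((hsin.pow 2).const_mul 2).sub_const 1).sub_const c
  have hQ := hD.sqrt hDpos.ne'
  have hQ0 : 0 < Real.sqrt (2 * Real.sin (u x) ^ 2 - 1 - c) := Real.sqrt_pos.mpr hDpos
  have hM := hsin.mul hQ
  have hMne : Real.sin (u x) * Real.sqrt (2 * Real.sin (u x) ^ 2 - 1 - c) ≠ 0 :=
    (mul_pos hs hQ0).ne'
  have hq := hcos.div hM hMne
  have hFd := hq.const_mul (Real.sqrt (1 + c))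
  rw [show deriv F x = _ from hFd.deriv]
  simp only [Pi.mul_apply]
  set S := Real.sin (u x) with hSdef
  set C := Real.cos (u x) with hCdef
  set Q := Real.sqrt (2 * S ^ 2 - 1 - c) with hQdef
  apply mul_neg_of_pos_of_neg (Real.sqrt_pos.mpr h1c)
  apply div_neg_of_neg_of_pos _ (by positivity)
  have hnum : -S * (1 / (2 * r)) * (S * Q) -
      C * (C * (1 / (2 * r)) * Q + S * (2 * ((2 : ℕ) * S ^ 1 * (C * (1 / (2 * r)))) / (2 * Q)))
      = -((S ^ 2 * Q ^ 2 + C ^ 2 * Q ^ 2 + 2 * S ^ 2 * C ^ 2) / (2 * r * Q)) := by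
    push_cast
    field_simp
    ring
  rw [hnum, neg_lt_zero]
  have h1 : 0 < S ^ 2 * Q ^ 2 := by positivity
  have h2 : 0 < C ^ 2 * Q ^ 2 := by positivity
  have h3 : 0 < 2 * S ^ 2 * C ^ 2 := by positivity
  positivity

/-- Strict concavity of `x ↦ regPerim x n` on `[0.03, 2.33]` for `n = 3,…,7`. -/
theorem regPerim_second_deriv_neg :
    ∀ n ∈ ({3, 4, 5, 6, 7} : Set ℕ), ∀ x ∈ Set.Icc (0.03 : ℝ) 2.33,
      deriv (deriv (fun y : ℝ => regPerim y (n : ℝ))) x < 0 := by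
  intro n hn x hx
  have hr3 : (3 : ℝ) ≤ (n : ℝ) := by
    simp only [Set.mem_insert_iff, Set.mem_singleton_iff] at hn
    rcases hn with rfl | rfl | rfl | rfl | rfl <;> norm_num
  exact second_deriv_neg (n : ℝ) x hr3 (by linarith [hx.1]) (by linarith [hx.2])
end

section
/- Let g : ℝ → ℝ be g(x) = 5·arccos((cos(2π/5) + cos(α(x)/2)²)/sin(α(x)/2)²) where α(x) = π − (2π − x)/5, i.e., g(x) = regPerim(x, 5) is the perimeter of a regular spherical pentagon of area x. Then g is differentiable at π/3 and its derivative g'(π/3) satisfies 1.50 < g'(π/3) < 1.52 (equivalently, the constant B' = −g'(π/3) satisfies −1.52 < B' < −1.50). -/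
open Real

/-- The area-derivative of the regular-pentagon perimeter at area `π/3`:
`g = regPerim · 5` is differentiable at `π/3` with `1.50 < g'(π/3) < 1.52`. -/
theorem regPerim_deriv_at_pent :
    DifferentiableAt ℝ (fun x : ℝ => regPerim x 5) (π / 3) ∧
      1.50 < deriv (fun x : ℝ => regPerim x 5) (π / 3) ∧
      deriv (fun x : ℝ => regPerim x 5) (π / 3) < 1.52 := by
  have h3 : Real.sqrt 3 ^ 2 = 3 := Real.sq_sqrt (by norm_num)
  have h5 : Real.sqrt 5 ^ 2 = 5 := Real.sq_sqrt (by norm_num)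
  have h3n : (0:ℝ) ≤ Real.sqrt 3 := Real.sqrt_nonneg 3
  have h5n : (0:ℝ) ≤ Real.sqrt 5 := Real.sqrt_nonneg 5
  have hc25 : Real.cos (2 * π / 5) = (Real.sqrt 5 - 1) / 4 := by
    rw [show (2:ℝ) * π / 5 = 2 * (π/5) by ring, Real.cos_two_mul, Real.cos_pi_div_five]
    nlinarith [h5]
  have hval : (π - (2 * π - π/3)/5)/2 = π/3 := by ring
  have hα : HasDerivAt (fun x : ℝ => (π - (2*π - x)/5)/2) (1/10) (π/3) := by
    have h := ((((hasDerivAt_id (π/3)).const_sub (2*π)).div_const 5).const_sub π).div_const 2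
    exact h.congr_deriv (by norm_num)
  have hc : HasDerivAt (fun x : ℝ => Real.cos ((π - (2*π - x)/5)/2))
      (-Real.sin (π/3) * (1/10)) (π/3) := by
    have := (Real.hasDerivAt_cos ((π - (2*π - π/3)/5)/2)).comp (π/3) hα
    rw [hval] at this
    exact this
  have hs : HasDerivAt (fun x : ℝ => Real.sin ((π - (2*π - x)/5)/2))
      (Real.cos (π/3) * (1/10)) (π/3) := by
    have := (Real.hasDerivAt_sin ((π - (2*π - π/3)/5)/2)).comp (π/3) hα
    rw [hval] at this
    exact this
  have hnum := (hc.pow 2).const_add (Real.cos (2 * π / 5))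
  have hden := hs.pow 2
  have hden0 : (Real.sin ((π - (2*π - π/3)/5)/2)) ^ 2 ≠ 0 := by
    rw [hval, Real.sin_pi_div_three]; positivity
  have hu := hnum.div hden hden0
  set uval : ℝ := (Real.cos (2 * π / 5) +
      Real.cos ((π - (2 * π - π/3) / 5) / 2) ^ 2) /
      Real.sin ((π - (2 * π - π/3) / 5) / 2) ^ 2 with huvaldef
  have huval : uval = Real.sqrt 5 / 3 := by
    rw [huvaldef, hval, Real.sin_pi_div_three, Real.cos_pi_div_three, hc25]
    field_simp
    nlinarith [h3]
  have hne1 : uval ≠ -1 := by rw [huval]; nlinarith [h5, h5n]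
  have hne1' : uval ≠ 1 := by rw [huval]; nlinarith [h5, h5n]
  have harc := Real.hasDerivAt_arccos hne1 hne1'
  have hcomp := harc.comp (π/3) hu
  have key := hcomp.const_mul (5:ℝ)
  have hkey : HasDerivAt (fun x : ℝ => regPerim x 5)
      (Real.sqrt 3 * (3 + Real.sqrt 5) / 6) (π/3) := by
    unfold regPerim
    refine key.congr_deriv ?_
    simp only [Pi.pow_apply]
    have hsqrt : Real.sqrt (1 - uval ^ 2) = 2/3 := by
      rw [huval, show (1:ℝ) - (Real.sqrt 5 / 3)^2 = (2/3)^2 by nlinarith [h5]]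
      exact Real.sqrt_sq (by norm_num)
    rw [hsqrt, hval, Real.sin_pi_div_three, Real.cos_pi_div_three, hc25]
    have h3' : Real.sqrt 3 ≠ 0 := by nlinarith [h3]
    push_cast
    field_simp
    linear_combination (360 - 120*(Real.sqrt 3^2+3) - 40*Real.sqrt 5*(Real.sqrt 3^2+3)) * h3
  have h3u : Real.sqrt 3 < 1.7321 := by nlinarith [h3, h3n]
  have h3l : (1.732:ℝ) < Real.sqrt 3 := by nlinarith [h3, h3n]
  have h5u : Real.sqrt 5 < 2.2361 := by nlinarith [h5, h5n]
  have h5l : (2.236:ℝ) < Real.sqrt 5 := by nlinarith [h5, h5n]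
  refine ⟨hkey.differentiableAt, ?_, ?_⟩ <;> rw [hkey.deriv] <;> nlinarith [h3u, h3l, h5u, h5l]
end

section
/- The following inequality holds: I(√(4π·3.474 − 3.474²), 5, −1.301, 1) > 0, i.e., circPerim0(3.474) + 1.301·B' − p₅ > 0. -/
open Real

lemma cos_two_pi_div_five' : Real.cos (2 * π / 5) = (Real.sqrt 5 - 1) / 4 := by
  have h : (2 * π / 5 : ℝ) = 2 * (π / 5) := by ring
  have h5 : Real.sqrt 5 ^ 2 = 5 := Real.sq_sqrt (by norm_num)
  rw [h, Real.cos_two_mul, Real.cos_pi_div_five]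
  linear_combination h5 / 8

lemma hval' : (Real.cos (2 * π / 5) + Real.cos (π/3) ^ 2) / Real.sin (π/3) ^ 2
    = Real.sqrt 5 / 3 := by
  have h3 : Real.sqrt 3 ^ 2 = 3 := Real.sq_sqrt (by norm_num)
  rw [cos_two_pi_div_five', Real.cos_pi_div_three, Real.sin_pi_div_three, div_pow,
    div_pow, h3]
  ring

lemma sqrt5_lt' : Real.sqrt 5 < 2.2360680 := by
  rw [Real.sqrt_lt' (by norm_num)]; norm_num

lemma sqrt5_gt' : 2.2360679 < Real.sqrt 5 := by
  rw [Real.lt_sqrt (by norm_num)]; norm_num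

lemma sqrt3_lt' : Real.sqrt 3 < 1.7320509 := by
  rw [Real.sqrt_lt' (by norm_num)]; norm_num

lemma derivB' : deriv (fun x : ℝ => regPerim x 5) (π / 3) =
    Real.sqrt 3 * (Real.sqrt 5 + 3) / 6 := by
  have hpt : (π - (2 * π - π/3) / 5) / 2 = π / 3 := by ring
  have h3 : Real.sqrt 3 ^ 2 = 3 := Real.sq_sqrt (by norm_num)
  have h5 : Real.sqrt 5 ^ 2 = 5 := Real.sq_sqrt (by norm_num)
  have h5lt : Real.sqrt 5 < 3 := by nlinarith [Real.sqrt_nonneg 5]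
  have h5pos : (0:ℝ) < Real.sqrt 5 := Real.sqrt_pos.mpr (by norm_num)
  have hθ : HasDerivAt (fun x : ℝ => (π - (2 * π - x) / 5) / 2) (1/10) (π/3) := by
    have h1 : HasDerivAt (fun x : ℝ => x) 1 (π/3) := hasDerivAt_id _
    have h2 := ((h1.const_sub (2*π)).div_const 5).const_sub π
    have h4 := h2.div_const 2
    rw [show (1/10:ℝ) = -(-1/5)/2 by norm_num]; exact h4
  have hc := hθ.cos
  have hs := hθ.sin
  have hnum := (hc.pow 2).const_add (Real.cos (2 * π / 5))
  have hden := hs.pow 2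
  have hdne : Real.sin ((π - (2 * π - π/3) / 5) / 2) ^ 2 ≠ 0 := by
    rw [hpt, Real.sin_pi_div_three]; positivity
  have hg := hnum.div hden hdne
  have hne1 : (Real.cos (2 * π / 5) + Real.cos ((π - (2 * π - π/3) / 5) / 2) ^ 2) /
      Real.sin ((π - (2 * π - π/3) / 5) / 2) ^ 2 ≠ -1 := by
    rw [hpt, hval']; intro h; nlinarith
  have hne2 : (Real.cos (2 * π / 5) + Real.cos ((π - (2 * π - π/3) / 5) / 2) ^ 2) /
      Real.sin ((π - (2 * π - π/3) / 5) / 2) ^ 2 ≠ 1 := by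
    rw [hpt, hval']; intro h; nlinarith
  have harc := (Real.hasDerivAt_arccos hne1 hne2).comp (π/3) hg
  have hfull := harc.const_mul (5:ℝ)
  have hfun : (fun x : ℝ => regPerim x 5) =
      (fun x : ℝ => 5 * (Real.arccos ∘ (fun x : ℝ =>
        (Real.cos (2 * π / 5) + Real.cos ((π - (2 * π - x) / 5) / 2) ^ 2) /
        Real.sin ((π - (2 * π - x) / 5) / 2) ^ 2)) x) := by
    funext x; simp [regPerim, Function.comp]
  rw [hfun]; refine hfull.deriv.trans ?_; simp only [Pi.pow_apply, Nat.cast_ofNat]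
  rw [hpt, hval', Real.cos_pi_div_three, Real.sin_pi_div_three]
  have hsq : Real.sqrt (1 - (Real.sqrt 5 / 3) ^ 2) = 2/3 := by
    rw [show (1 - (Real.sqrt 5 / 3) ^ 2 : ℝ) = (2/3)^2 by rw [div_pow, h5]; ring]
    exact Real.sqrt_sq (by norm_num)
  rw [hsq, cos_two_pi_div_five']
  field_simp
  ring_nf
  rw [show Real.sqrt 3 ^ 3 = Real.sqrt 3 ^ 2 * Real.sqrt 3 by ring,
    show Real.sqrt 3 ^ 5 = (Real.sqrt 3 ^ 2) ^ 2 * Real.sqrt 3 by ring, h3]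
  ring

lemma cos_small' : Real.cos 0.7304 < 0.74509 := by
  have hb := Real.cos_bound (x := 0.1826) (by norm_num [abs_of_pos])
  have h1 : Real.cos 0.3652 = 2 * Real.cos 0.1826 ^ 2 - 1 := by
    rw [show (0.3652:ℝ) = 2 * 0.1826 by norm_num, Real.cos_two_mul]
  have h2 : Real.cos 0.7304 = 2 * Real.cos 0.3652 ^ 2 - 1 := by
    rw [show (0.7304:ℝ) = 2 * 0.3652 by norm_num, Real.cos_two_mul]
  have habs : |Real.cos 0.1826 - (1 - 0.1826 ^ 2 / 2)| ≤ |(0.1826:ℝ)| ^ 4 * (5/96) := hb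
  rw [abs_le] at habs
  obtain ⟨hl, hu⟩ := habs
  have hc1u : Real.cos 0.1826 ≤ 0.9833866 := by
    rw [abs_of_pos (by norm_num : (0:ℝ) < 0.1826)] at hu; nlinarith
  have hc1l : (0.9832707:ℝ) ≤ Real.cos 0.1826 := by
    rw [abs_of_pos (by norm_num : (0:ℝ) < 0.1826)] at hl; nlinarith
  have hc2u : Real.cos 0.3652 ≤ 0.9340985 := by nlinarith
  have hc2l : (0.933642:ℝ) ≤ Real.cos 0.3652 := by nlinarith
  nlinarith

lemma arccos_small' : Real.arccos (Real.sqrt 5 / 3) < 0.7304 := by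
  have h5lt : Real.sqrt 5 < 3 := by
    nlinarith [sqrt5_lt']
  have h5pos : (0:ℝ) < Real.sqrt 5 := Real.sqrt_pos.mpr (by norm_num)
  have hmem1 : Real.arccos (Real.sqrt 5 / 3) ∈ Set.Icc 0 π :=
    ⟨Real.arccos_nonneg _, Real.arccos_le_pi _⟩
  have hmem2 : (0.7304:ℝ) ∈ Set.Icc 0 π := by
    constructor
    · norm_num
    · nlinarith [Real.pi_gt_three]
  have hcos : Real.cos 0.7304 < Real.cos (Real.arccos (Real.sqrt 5 / 3)) := by
    rw [Real.cos_arccos (by nlinarith) (by nlinarith)]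
    nlinarith [cos_small', sqrt5_gt']
  exact (Real.strictAntiOn_cos.lt_iff_gt hmem2 hmem1).mp hcos

lemma circ_gt' : (5.6202:ℝ) < circPerim0 3.474 := by
  unfold circPerim0
  rw [Real.lt_sqrt (by norm_num)]
  nlinarith [Real.pi_gt_d6]

theorem case_area_large :
    Ifun (circPerim0 3.474) 5 (-1.301) 1 > 0 := by
  have hp5 : p5 = 5 * Real.arccos (Real.sqrt 5 / 3) := by
    unfold p5
    rw [cos_two_pi_div_five', show (4 * ((Real.sqrt 5 - 1) / 4) + 1) / 3
      = Real.sqrt 5 / 3 by ring]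
  have hB : B' = -(Real.sqrt 3 * (Real.sqrt 5 + 3) / 6) := by
    unfold B'; rw [derivB']
  have hI : Ifun (circPerim0 3.474) 5 (-1.301) 1 =
      circPerim0 3.474 - 1.301 * (Real.sqrt 3 * (Real.sqrt 5 + 3) / 6)
        - 5 * Real.arccos (Real.sqrt 5 / 3) := by
    unfold Ifun
    rw [hB, hp5]; ring
  rw [hI]
  have h3pos : (0:ℝ) ≤ Real.sqrt 3 := Real.sqrt_nonneg 3
  have h5pos : (0:ℝ) ≤ Real.sqrt 5 := Real.sqrt_nonneg 5
  nlinarith [circ_gt', arccos_small', sqrt3_lt', sqrt5_lt',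
    mul_nonneg h3pos h5pos]
end

section
/- Define T₀(5) = −0.1382, T₀(6) = −0.0711, T₀(7) = −0.01362, ρ₂(5) = 0.913, ρ₂(6) = 0.952, ρ₂(7) = 0.99, and a(5) = a(6) = 0.1, a(7) = 3.75/49. For each n ∈ {5, 6, 7}, each t with T₀(n) ≤ t ≤ 0, and each ρ with 3·a(n)/π ≤ ρ ≤ ρ₂(n), one has I(circPerim0(ρπ/3 − 2t), n, t, ρ) > 0, i.e., √(4π·a − a²) − t·B' + (5 − n)·p₅' − ρ·p₅ > 0 where a = ρπ/3 − 2t. -/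
open Real

/-- The constant `ρ₁` of the proof (values specified only for `n = 5, 6, 7`). -/
noncomputable def rho1 : ℕ → ℝ
  | 5 => 0.913
  | 6 => 0.952
  | 7 => 0.99
  | _ => 1

/-- The constant `T₁` of the proof (values specified only for `n = 5, 6, 7`). -/
noncomputable def T1 : ℕ → ℝ
  | 5 => 0.117
  | 6 => 0.065
  | 7 => 0.0134
  | _ => 0

/-- The constant `T₀` of the proof (values specified only for `n = 5, 6, 7`). -/
noncomputable def T0 : ℕ → ℝ
  | 5 => -0.1382
  | 6 => -0.0711
  | 7 => -0.01362
  | _ => 0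

/-- The constant `ρ₂` of the proof (values specified only for `n = 5, 6, 7`). -/
noncomputable def rho2 : ℕ → ℝ
  | 5 => 0.913
  | 6 => 0.952
  | 7 => 0.99
  | _ => 1

/-- The upper bound `R(n)`: `0.9957` for `n = 5` and `1` otherwise. -/
noncomputable def Rbd : ℕ → ℝ
  | 5 => 0.9957
  | _ => 1

/-- The area lower bound `a(n) = min (3.75 / n², 0.1)`. -/
noncomputable def aFn (n : ℕ) : ℝ := min (3.75 / (n : ℝ) ^ 2) 0.1


set_option maxHeartbeats 1000000

namespace CaseTNeg

lemma sqrt5_sq : (Real.sqrt 5) ^ 2 = 5 := Real.sq_sqrt (by norm_num)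
lemma sqrt3_sq : (Real.sqrt 3) ^ 2 = 3 := Real.sq_sqrt (by norm_num)

lemma cos_2pi5 : Real.cos (2 * π / 5) = (Real.sqrt 5 - 1) / 4 := by
  have h : (2:ℝ) * π / 5 = 2 * (π / 5) := by ring
  rw [h, Real.cos_two_mul, Real.cos_pi_div_five]
  linear_combination (1/8) * sqrt5_sq

lemma val_g : (Real.cos (2 * π / 5) + (Real.cos (π/3)) ^ 2) / (Real.sin (π/3)) ^ 2
    = Real.sqrt 5 / 3 := by
  rw [cos_2pi5, Real.cos_pi_div_three, Real.sin_pi_div_three]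
  have h3 : ((Real.sqrt 3 / 2) ^ 2 : ℝ) = 3 / 4 := by
    rw [div_pow, sqrt3_sq]; norm_num
  rw [h3]; ring

lemma sqrt5_lt : Real.sqrt 5 / 3 < 1 := by
  nlinarith [sqrt5_sq, Real.sqrt_nonneg 5]
lemma sqrt5_gt : (-1 : ℝ) < Real.sqrt 5 / 3 := by
  nlinarith [Real.sqrt_nonneg 5]
lemma sqrt_one_sub : Real.sqrt (1 - (Real.sqrt 5 / 3) ^ 2) = 2 / 3 := by
  rw [div_pow, sqrt5_sq]
  rw [show (1 : ℝ) - 5 / 3 ^ 2 = (2/3)^2 by norm_num]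
  exact Real.sqrt_sq (by norm_num)

lemma sqrt5_ub : Real.sqrt 5 ≤ 2.2360680 := by
  nlinarith [sqrt5_sq, Real.sqrt_nonneg 5]
lemma sqrt5_lb : (2.2360679:ℝ) ≤ Real.sqrt 5 := by
  nlinarith [sqrt5_sq, Real.sqrt_nonneg 5]
lemma sqrt3_ub : Real.sqrt 3 ≤ 1.7320509 := by
  nlinarith [sqrt3_sq, Real.sqrt_nonneg 3]
lemma sqrt3_lb : (1.7320508:ℝ) ≤ Real.sqrt 3 := by
  nlinarith [sqrt3_sq, Real.sqrt_nonneg 3]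

lemma sin_2pi5_lb : (0.9510565 : ℝ) ≤ Real.sin (2 * π / 5) := by
  have hπ := Real.pi_gt_d6
  have hπ' := Real.pi_lt_d6
  have hpos : 0 < Real.sin (2 * π / 5) :=
    Real.sin_pos_of_pos_of_lt_pi (by nlinarith) (by nlinarith)
  have hsq := Real.sin_sq_add_cos_sq (2 * π / 5)
  rw [cos_2pi5] at hsq
  nlinarith [hpos, hsq, sqrt5_lb, sqrt5_ub]

lemma cos_double_le {θ h : ℝ} (h0 : 0 ≤ Real.cos θ) (hh : Real.cos θ ≤ h) :
    Real.cos (2*θ) ≤ 2*h^2 - 1 := by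
  rw [Real.cos_two_mul]; nlinarith

lemma cos_nonneg_small {θ : ℝ} (h0 : 0 ≤ θ) (h1 : θ ≤ 1.5) : 0 ≤ Real.cos θ :=
  Real.cos_nonneg_of_mem_Icc ⟨by nlinarith [Real.pi_gt_d6], by nlinarith [Real.pi_gt_d6]⟩

lemma cos_u_le : Real.cos 0.72978 ≤ 0.745323732409 := by
  have hx : |(0.72978/32 : ℝ)| ≤ 1 := by rw [abs_of_nonneg]; norm_num; norm_num
  have hb := (abs_le.1 (Real.cos_bound hx)).2
  have h0 : Real.cos (0.72978/32) ≤ 0.999739965823 := by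
    rw [abs_of_nonneg (by norm_num : (0:ℝ) ≤ 0.72978/32)] at hb
    nlinarith [hb]
  have h1 : Real.cos (0.72978/16) ≤ 15608749977/15625000000 := by
    have := cos_double_le (cos_nonneg_small (by norm_num) (by norm_num)) h0
    rw [show (2:ℝ) * (0.72978/32) = 0.72978/16 by norm_num] at this
    nlinarith [this]
  have h2 : Real.cos (0.72978/8) ≤ 0.995842157319 := by
    have := cos_double_le (cos_nonneg_small (by norm_num) (by norm_num)) h1
    rw [show (2:ℝ) * (0.72978/16) = 0.72978/8 by norm_num] at this
    nlinarith [this]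
  have h3 : Real.cos (0.72978/4) ≤ 0.983403204588 := by
    have := cos_double_le (cos_nonneg_small (by norm_num) (by norm_num)) h2
    rw [show (2:ℝ) * (0.72978/8) = 0.72978/4 by norm_num] at this
    nlinarith [this]
  have h4 : Real.cos (0.72978/2) ≤ 0.934163725588 := by
    have := cos_double_le (cos_nonneg_small (by norm_num) (by norm_num)) h3
    rw [show (2:ℝ) * (0.72978/4) = 0.72978/2 by norm_num] at this
    nlinarith [this]
  have h5 : Real.cos 0.72978 ≤ 0.745323732409 := by
    have := cos_double_le (cos_nonneg_small (by norm_num) (by norm_num)) h4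
    rw [show (2:ℝ) * (0.72978/2) = 0.72978 by norm_num] at this
    nlinarith [this]
  exact h5

lemma arccos_A_le : Real.arccos (Real.sqrt 5 / 3) ≤ 0.72978 := by
  have hπ := Real.pi_gt_d6
  have hru : Real.sqrt 5 ≤ 2.2360680 := by nlinarith [sqrt5_sq, Real.sqrt_nonneg 5]
  have hrl : (2.2360679 : ℝ) ≤ Real.sqrt 5 := by nlinarith [sqrt5_sq, Real.sqrt_nonneg 5]
  rw [Real.arccos_eq_pi_div_two_sub_arcsin]
  have h : π/2 - 0.72978 ≤ Real.arcsin (Real.sqrt 5 / 3) := by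
    refine (Real.le_arcsin_iff_sin_le ⟨by nlinarith [Real.pi_lt_d6], by nlinarith⟩
      ⟨by nlinarith, by nlinarith⟩).2 ?_
    rw [Real.sin_pi_div_two_sub]
    calc Real.cos 0.72978 ≤ 0.745323732409 := cos_u_le
      _ ≤ Real.sqrt 5 / 3 := by nlinarith
  linarith

lemma hasDerivAt_x : HasDerivAt (fun x : ℝ => regPerim x 5)
    (Real.sqrt 3 * (3 + Real.sqrt 5) / 6) (π / 3) := by
  have hβv : (π - (2 * π - π/3) / 5) / 2 = π / 3 := by ring
  have hβ : HasDerivAt (fun x : ℝ => (π - (2 * π - x) / 5) / 2) (1/10) (π/3) := by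
    have h := ((((hasDerivAt_id (π/3)).const_sub (2*π)).div_const 5).const_sub π).div_const 2
    exact h.congr_deriv (by norm_num)
  have hcosβ : HasDerivAt (fun x : ℝ => Real.cos ((π - (2 * π - x) / 5) / 2))
      (-Real.sin (π/3) * (1/10)) (π/3) := by
    have h := (Real.hasDerivAt_cos ((π - (2 * π - π/3) / 5) / 2)).comp (π/3) hβ
    rw [hβv] at h; exact h
  have hsinβ : HasDerivAt (fun x : ℝ => Real.sin ((π - (2 * π - x) / 5) / 2))
      (Real.cos (π/3) * (1/10)) (π/3) := by
    have h := (Real.hasDerivAt_sin ((π - (2 * π - π/3) / 5) / 2)).comp (π/3) hβ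
    rw [hβv] at h; exact h
  have hnum : HasDerivAt (fun x : ℝ => Real.cos (2*π/5) + (Real.cos ((π - (2 * π - x) / 5) / 2))^2)
      (2 * Real.cos (π/3) ^ 1 * (-Real.sin (π/3) * (1/10))) (π/3) := by
    have h := (hcosβ.pow 2).const_add (Real.cos (2*π/5))
    rw [hβv] at h
    exact h
  have hden : HasDerivAt (fun x : ℝ => (Real.sin ((π - (2 * π - x) / 5) / 2))^2)
      (2 * Real.sin (π/3) ^ 1 * (Real.cos (π/3) * (1/10))) (π/3) := by
    have h := hsinβ.pow 2
    rw [hβv] at h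
    exact h
  have hden0 : (Real.sin (π/3))^2 ≠ 0 := by
    rw [Real.sin_pi_div_three]
    nlinarith [sqrt3_sq, Real.sqrt_nonneg 3]
  have hg := hnum.div hden (by rw [hβv] at *; exact hden0)
  rw [hβv] at hg
  have hval2 : (Real.cos (2*π/5) + (Real.cos ((π - (2 * π - π/3) / 5) / 2))^2) /
      (Real.sin ((π - (2 * π - π/3) / 5) / 2))^2 = Real.sqrt 5 / 3 := by
    rw [hβv]; exact val_g
  have harc := (Real.hasDerivAt_arccos
      (x := (Real.cos (2*π/5) + (Real.cos ((π - (2 * π - π/3) / 5) / 2))^2) /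
      (Real.sin ((π - (2 * π - π/3) / 5) / 2))^2)
      (by rw [hval2]; exact ne_of_gt sqrt5_gt) (by rw [hval2]; exact ne_of_lt sqrt5_lt)).comp (π/3) hg
  have hfinal := harc.const_mul (5 : ℝ)
  have heq : (fun x : ℝ => regPerim x 5) = (fun x : ℝ =>
      5 * Real.arccos ((Real.cos (2 * π / 5) + (Real.cos ((π - (2 * π - x) / 5) / 2)) ^ 2) /
      (Real.sin ((π - (2 * π - x) / 5) / 2)) ^ 2)) := by
    funext y; simp [regPerim]
  rw [heq]
  refine hfinal.congr_deriv ?_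
  symm
  rw [hval2, sqrt_one_sub, Real.cos_pi_div_three, Real.sin_pi_div_three, cos_2pi5]
  have h3 : ((Real.sqrt 3 / 2) ^ 2 : ℝ) = 3 / 4 := by rw [div_pow, sqrt3_sq]; norm_num
  rw [h3]
  field_simp
  ring

lemma hasDerivAt_n : HasDerivAt (fun n : ℝ => regPerim (π/3) n)
    (Real.arccos (Real.sqrt 5 / 3) - 4 * π * Real.sin (2*π/5) / 5
      + Real.sqrt 3 * π * (3 + Real.sqrt 5) / 18) 5 := by
  have h5 : (5:ℝ) ≠ 0 := by norm_num
  have hγv : (π - (2 * π - π/3) / 5) / 2 = π / 3 := by ring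
  have h2πv : 2 * π / 5 = 2 * π / 5 := rfl
  -- inner function n ↦ 2π/n
  have hinv : HasDerivAt (fun n : ℝ => n⁻¹) (-((5:ℝ)^2)⁻¹) 5 := hasDerivAt_inv h5
  have h2π : HasDerivAt (fun n : ℝ => 2 * π / n) (2 * π * -((5:ℝ)^2)⁻¹) 5 := by
    have h := hinv.const_mul (2*π)
    simpa [div_eq_mul_inv] using h
  have hcos2π : HasDerivAt (fun n : ℝ => Real.cos (2 * π / n))
      (-Real.sin (2*π/5) * (2 * π * -((5:ℝ)^2)⁻¹)) 5 :=
    (Real.hasDerivAt_cos (2*π/5)).comp 5 h2π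
  -- γ n = (π - (2π - π/3)/n)/2
  have hγ : HasDerivAt (fun n : ℝ => (π - (2 * π - π/3) / n) / 2)
      ((2 * π - π/3) * ((5:ℝ)^2)⁻¹ / 2) 5 := by
    have h := (((hinv.const_mul (2 * π - π/3)).const_sub π).div_const 2)
    have heq : (fun n : ℝ => (π - (2 * π - π/3) / n) / 2)
        = (fun n : ℝ => (π - (2 * π - π/3) * n⁻¹) / 2) := by
      funext y; ring
    rw [heq]
    exact h.congr_deriv (by ring)
  have hcosγ : HasDerivAt (fun n : ℝ => Real.cos ((π - (2 * π - π/3) / n) / 2))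
      (-Real.sin (π/3) * ((2 * π - π/3) * ((5:ℝ)^2)⁻¹ / 2)) 5 := by
    have h := (Real.hasDerivAt_cos ((π - (2 * π - π/3) / 5) / 2)).comp 5 hγ
    rw [hγv] at h; exact h
  have hsinγ : HasDerivAt (fun n : ℝ => Real.sin ((π - (2 * π - π/3) / n) / 2))
      (Real.cos (π/3) * ((2 * π - π/3) * ((5:ℝ)^2)⁻¹ / 2)) 5 := by
    have h := (Real.hasDerivAt_sin ((π - (2 * π - π/3) / 5) / 2)).comp 5 hγ
    rw [hγv] at h; exact h
  have hnum : HasDerivAt (fun n : ℝ => Real.cos (2 * π / n) + (Real.cos ((π - (2 * π - π/3) / n) / 2))^2)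
      ((-Real.sin (2*π/5) * (2 * π * -((5:ℝ)^2)⁻¹)) +
        2 * Real.cos (π/3) ^ 1 * (-Real.sin (π/3) * ((2 * π - π/3) * ((5:ℝ)^2)⁻¹ / 2))) 5 := by
    have h := hcos2π.add (hcosγ.pow 2)
    rw [hγv] at h; exact h
  have hden : HasDerivAt (fun n : ℝ => (Real.sin ((π - (2 * π - π/3) / n) / 2))^2)
      (2 * Real.sin (π/3) ^ 1 * (Real.cos (π/3) * ((2 * π - π/3) * ((5:ℝ)^2)⁻¹ / 2))) 5 := by
    have h := hsinγ.pow 2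
    rw [hγv] at h; exact h
  have hden0 : (Real.sin ((π - (2 * π - π/3) / 5) / 2))^2 ≠ 0 := by
    rw [hγv, Real.sin_pi_div_three]
    nlinarith [sqrt3_sq, Real.sqrt_nonneg 3]
  have hg := hnum.div hden hden0
  have hval2 : (Real.cos (2*π/5) + (Real.cos ((π - (2 * π - π/3) / 5) / 2))^2) /
      (Real.sin ((π - (2 * π - π/3) / 5) / 2))^2 = Real.sqrt 5 / 3 := by
    rw [hγv]; exact val_g
  have harc := (Real.hasDerivAt_arccos
      (x := (Real.cos (2*π/5) + (Real.cos ((π - (2 * π - π/3) / 5) / 2))^2) /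
      (Real.sin ((π - (2 * π - π/3) / 5) / 2))^2)
      (by rw [hval2]; exact ne_of_gt sqrt5_gt) (by rw [hval2]; exact ne_of_lt sqrt5_lt)).comp 5 hg
  have hfinal := (hasDerivAt_id (5:ℝ)).mul harc
  have heq : (fun n : ℝ => regPerim (π/3) n) = (fun n : ℝ =>
      n * Real.arccos ((Real.cos (2 * π / n) + (Real.cos ((π - (2 * π - π/3) / n) / 2)) ^ 2) /
      (Real.sin ((π - (2 * π - π/3) / n) / 2)) ^ 2)) := by
    funext y; simp [regPerim]
  rw [heq]
  refine hfinal.congr_deriv ?_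
  symm
  simp only [Function.comp_apply, id_eq, Pi.div_apply]
  rw [hval2, sqrt_one_sub, hγv, cos_2pi5, Real.cos_pi_div_three, Real.sin_pi_div_three]
  have h3 : ((Real.sqrt 3 / 2) ^ 2 : ℝ) = 3 / 4 := by rw [div_pow, sqrt3_sq]; norm_num
  rw [h3]
  field_simp
  ring

lemma core_num {P u v t ρ C A K : ℝ} (Clv : ℝ)
    (hπl : 3.141592 < P) (hπu : P < 3.141593)
    (ht0 : -0.1382 ≤ t) (ht1 : t ≤ 0)
    (hρ0 : 0.073 ≤ ρ) (hρ1 : ρ ≤ 0.99)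
    (hC : Clv ≤ C)
    (hquad : (3.141592:ℝ)^2*(4*ρ/3 - ρ^2/9) - (ρ*3.6489 - Clv)^2 > 0)
    (hA0 : 0 ≤ A) (hA : A ≤ 0.72978) (hK0 : 0 ≤ K) (hK : K ≤ 1.51153)
    (hu0 : 0 ≤ u) (hv0 : 0 ≤ v)
    (hu2 : u ^ 2 = 4 * P * (ρ * P / 3 - 2 * t) - (ρ * P / 3 - 2 * t) ^ 2)
    (hv2 : v ^ 2 = 4 * P * (ρ * P / 3) - (ρ * P / 3) ^ 2) :
    u - t * -K + C - ρ * (5 * A) > 0 := by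
  have hρπ_l : 0.073 * 3.141592 ≤ ρ * P := by
    nlinarith [mul_nonneg (sub_nonneg.2 hρ0) (sub_nonneg.2 hπl.le)]
  have hρπ_u : ρ * P ≤ 0.99 * 3.141593 := by
    nlinarith [mul_nonneg (sub_nonneg.2 hρ1) (sub_nonneg.2 hπu.le)]
  -- upper bounds for u and v
  have hu2' : u ^ 2 ≤ 16.6 := by nlinarith [sq_nonneg (ρ * P / 3 - 2 * t)]
  have hv2' : v ^ 2 ≤ 16.6 := by nlinarith [sq_nonneg (ρ * P / 3)]
  have hu41 : u ≤ 4.1 := by nlinarith [hu2', hu0]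
  have hv41 : v ≤ 4.1 := by nlinarith [hv2', hv0]
  have hv2'' : v ^ 2 = P ^ 2 * (4 * ρ / 3 - ρ ^ 2 / 9) := by linear_combination hv2
  have hvpos : 0 < v ^ 2 := by nlinarith [sq_nonneg P]
  have hv0' : 0 < v := by
    rcases hv0.lt_or_eq with h | h
    · exact h
    · exfalso; rw [← h] at hvpos; simp at hvpos
  -- Step 1 : v ≤ u + t * K
  have hfac : 0 ≤ (u - v + t * K) * (u + v) := by
    have hdiff : u ^ 2 - v ^ 2 = (-2 * t) * (4 * P - (ρ * P / 3 - 2 * t) - ρ * P / 3) := by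
      linear_combination hu2 - hv2
    have hlin : 1.51153 * (u + v) ≤ 2 * (4 * P - (ρ * P / 3 - 2 * t) - ρ * P / 3) := by
      linarith [hρπ_u]
    have hnt : 0 ≤ -t := by linarith
    have h1 : (-t) * (1.51153 * (u + v)) ≤
        (-t) * (2 * (4 * P - (ρ * P / 3 - 2 * t) - ρ * P / 3)) :=
      mul_le_mul_of_nonneg_left hlin hnt
    have h2 : (-t) * (K * (u + v)) ≤ (-t) * (1.51153 * (u + v)) :=
      mul_le_mul_of_nonneg_left
        (mul_le_mul_of_nonneg_right hK (by linarith)) hnt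
    nlinarith [h1, h2, hdiff]
  have hstep1 : v ≤ u + t * K := by nlinarith [hfac, hv0', hu0]
  -- Step 2 : v > ρ * 3.6489 - Clv
  have hp2 : (3.141592:ℝ) ^ 2 ≤ P ^ 2 := by nlinarith
  have hf : 0 ≤ 4 * ρ / 3 - ρ ^ 2 / 9 := by nlinarith
  have hq : v ^ 2 ≥ 3.141592 ^ 2 * (4 * ρ / 3 - ρ ^ 2 / 9) := by
    rw [hv2'']; exact mul_le_mul_of_nonneg_right hp2 hf
  have hquadv : v ^ 2 > (ρ * 3.6489 - Clv) ^ 2 := by nlinarith [hq, hquad]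
  have hvL : ρ * 3.6489 - Clv < v := by
    by_contra h
    push_neg at h
    nlinarith [hquadv, hv0', h]
  have h5A : ρ * (5 * A) ≤ ρ * 3.6489 :=
    mul_le_mul_of_nonneg_left (by linarith) (by linarith)
  nlinarith [hstep1, hvL, h5A, hC]

lemma core {t ρ C A K : ℝ} (Clv : ℝ)
    (ht0 : -0.1382 ≤ t) (ht1 : t ≤ 0)
    (hρ0 : 0.073 ≤ ρ) (hρ1 : ρ ≤ 0.99)
    (hC : Clv ≤ C)
    (hquad : (3.141592:ℝ)^2*(4*ρ/3 - ρ^2/9) - (ρ*3.6489 - Clv)^2 > 0)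
    (hA0 : 0 ≤ A) (hA : A ≤ 0.72978) (hK0 : 0 ≤ K) (hK : K ≤ 1.51153) :
    Real.sqrt (4 * π * (ρ * π / 3 - 2 * t) - (ρ * π / 3 - 2 * t) ^ 2)
      - t * -K + C - ρ * (5 * A) > 0 := by
  have hπl := Real.pi_gt_d6
  have hπu := Real.pi_lt_d6
  have hρπ_l : 0.073 * 3.141592 ≤ ρ * π := by
    nlinarith [mul_nonneg (sub_nonneg.2 hρ0) (sub_nonneg.2 hπl.le)]
  have hρπ_u : ρ * π ≤ 0.99 * 3.141593 := by
    nlinarith [mul_nonneg (sub_nonneg.2 hρ1) (sub_nonneg.2 hπu.le)]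
  have harg1 : 0 ≤ 4 * π * (ρ * π / 3 - 2 * t) - (ρ * π / 3 - 2 * t) ^ 2 := by
    have h1 : 0 < ρ * π / 3 - 2 * t := by linarith
    have h2 : 0 < 4 * π - (ρ * π / 3 - 2 * t) := by linarith
    nlinarith [mul_pos h1 h2]
  have harg0 : 0 ≤ 4 * π * (ρ * π / 3) - (ρ * π / 3) ^ 2 := by
    have h1 : 0 < ρ * π / 3 := by linarith
    have h2 : 0 < 4 * π - ρ * π / 3 := by linarith
    nlinarith [mul_pos h1 h2]
  exact core_num Clv hπl hπu ht0 ht1 hρ0 hρ1 hC hquad hA0 hA hK0 hK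
    (Real.sqrt_nonneg _) (Real.sqrt_nonneg _) (Real.sq_sqrt harg1) (Real.sq_sqrt harg0)

lemma Keq : B' = -(Real.sqrt 3 * (3 + Real.sqrt 5) / 6) := by
  rw [B', hasDerivAt_x.deriv]

lemma p5eq : p5 = 5 * Real.arccos (Real.sqrt 5 / 3) := by
  rw [p5]
  congr 1
  rw [cos_2pi5]
  ring_nf

lemma p5'eq : p5' = Real.arccos (Real.sqrt 5 / 3) - 4 * π * Real.sin (2*π/5) / 5
    + Real.sqrt 3 * π * (3 + Real.sqrt 5) / 18 := by
  rw [p5', hasDerivAt_n.deriv]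

lemma K_ub : Real.sqrt 3 * (3 + Real.sqrt 5) / 6 ≤ 1.51153 := by
  nlinarith [sqrt3_ub, sqrt5_ub, sqrt3_lb, sqrt5_lb,
    mul_nonneg (sub_nonneg.2 sqrt3_lb) (sub_nonneg.2 sqrt5_lb)]

lemma K_nonneg : 0 ≤ Real.sqrt 3 * (3 + Real.sqrt 5) / 6 := by
  have := Real.sqrt_nonneg 3
  have := Real.sqrt_nonneg 5
  positivity

lemma p5'_ub : p5' ≤ -0.07762 := by
  rw [p5'eq]
  have hπl := Real.pi_gt_d6
  have hπu := Real.pi_lt_d6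
  have hs := sin_2pi5_lb
  have h1 : 4 * (3.141592 * 0.9510565) / 5 ≤ 4 * π * Real.sin (2*π/5) / 5 := by
    nlinarith [mul_nonneg (sub_nonneg.2 hπl.le) (sub_nonneg.2 hs)]
  have h2 : Real.sqrt 3 * π * (3 + Real.sqrt 5) ≤ 1.7320509 * 3.141593 * (3 + 2.2360680) := by
    have h3 : Real.sqrt 3 * π ≤ 1.7320509 * 3.141593 := by
      nlinarith [sqrt3_ub, sqrt3_lb, mul_nonneg (sub_nonneg.2 sqrt3_lb) (sub_nonneg.2 hπl.le)]
    have h4 : (0:ℝ) ≤ 3 + Real.sqrt 5 := by nlinarith [sqrt5_lb]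
    nlinarith [sqrt5_ub, mul_nonneg (sub_nonneg.2 h3) h4, sqrt5_lb]
  have hA := arccos_A_le
  linarith [h1, h2, hA]

end CaseTNeg

theorem case_T_neg_rho_small :
    ∀ n ∈ ({5, 6, 7} : Set ℕ), ∀ t ∈ Set.Icc (T0 n) 0,
      ∀ ρ ∈ Set.Icc (3 * aFn n / π) (rho2 n),
        Ifun (circPerim0 (ρ * π / 3 - 2 * t)) (n : ℝ) t ρ > 0 := by
  have hπl := Real.pi_gt_d6
  have hπu := Real.pi_lt_d6
  have hπ0 : (0:ℝ) < π := by linarith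
  have hA0 : 0 ≤ Real.arccos (Real.sqrt 5 / 3) := Real.arccos_nonneg _
  have hA := CaseTNeg.arccos_A_le
  have hK0 := CaseTNeg.K_nonneg
  have hKu := CaseTNeg.K_ub
  have hp5' := CaseTNeg.p5'_ub
  intro n hn t ht ρ hρ
  simp only [Set.mem_insert_iff, Set.mem_singleton_iff] at hn
  rcases hn with rfl | rfl | rfl
  · -- n = 5
    have hT : T0 5 = -0.1382 := rfl
    have hR : rho2 5 = 0.913 := rfl
    have haF : aFn 5 = 0.1 := by rw [aFn]; norm_num
    rw [hT] at ht; rw [hR, haF] at hρ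
    obtain ⟨ht0, ht1⟩ := ht
    obtain ⟨hρ0, hρ1⟩ := hρ
    have hρ0' : (0.0954:ℝ) ≤ ρ := by
      have h1 : 3 * (0.1:ℝ) / 3.141593 ≤ 3 * 0.1 / π := by gcongr
      have h2 : (0.0954:ℝ) ≤ 3 * 0.1 / 3.141593 := by norm_num
      linarith
    have hC : (0:ℝ) ≤ (5 - ((5:ℕ):ℝ)) * p5' := by norm_num
    have hquad : (3.141592:ℝ)^2*(4*ρ/3 - ρ^2/9) - (ρ*3.6489 - 0)^2 > 0 := by
      nlinarith [mul_nonneg (sub_nonneg.2 hρ0') (sub_nonneg.2 hρ1)]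
    have hcore := CaseTNeg.core (t := t) (ρ := ρ) (C := (5 - ((5:ℕ):ℝ)) * p5')
      (A := Real.arccos (Real.sqrt 5 / 3)) (K := Real.sqrt 3 * (3 + Real.sqrt 5) / 6)
      0 ht0 ht1 (by linarith) (by linarith) hC hquad hA0 hA hK0 hKu
    simp only [Ifun, circPerim0, CaseTNeg.Keq, CaseTNeg.p5eq]
    linarith [hcore]
  · -- n = 6
    have hT : T0 6 = -0.0711 := rfl
    have hR : rho2 6 = 0.952 := rfl
    have haF : aFn 6 = 0.1 := by rw [aFn]; norm_num
    rw [hT] at ht; rw [hR, haF] at hρ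
    obtain ⟨ht0, ht1⟩ := ht
    obtain ⟨hρ0, hρ1⟩ := hρ
    have hρ0' : (0.0954:ℝ) ≤ ρ := by
      have h1 : 3 * (0.1:ℝ) / 3.141593 ≤ 3 * 0.1 / π := by gcongr
      have h2 : (0.0954:ℝ) ≤ 3 * 0.1 / 3.141593 := by norm_num
      linarith
    have hC : (0.07762:ℝ) ≤ (5 - ((6:ℕ):ℝ)) * p5' := by
      push_cast
      nlinarith [hp5']
    have hquad : (3.141592:ℝ)^2*(4*ρ/3 - ρ^2/9) - (ρ*3.6489 - 0.07762)^2 > 0 := by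
      nlinarith [mul_nonneg (sub_nonneg.2 hρ0') (sub_nonneg.2 hρ1)]
    have hcore := CaseTNeg.core (t := t) (ρ := ρ) (C := (5 - ((6:ℕ):ℝ)) * p5')
      (A := Real.arccos (Real.sqrt 5 / 3)) (K := Real.sqrt 3 * (3 + Real.sqrt 5) / 6)
      0.07762 (by linarith) ht1 (by linarith) (by linarith) hC hquad hA0 hA hK0 hKu
    simp only [Ifun, circPerim0, CaseTNeg.Keq, CaseTNeg.p5eq]
    linarith [hcore]
  · -- n = 7
    have hT : T0 7 = -0.01362 := rfl
    have hR : rho2 7 = 0.99 := rfl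
    have haF : aFn 7 = 3.75 / 49 := by rw [aFn]; norm_num
    rw [hT] at ht; rw [hR, haF] at hρ
    obtain ⟨ht0, ht1⟩ := ht
    obtain ⟨hρ0, hρ1⟩ := hρ
    have hρ0' : (0.073:ℝ) ≤ ρ := by
      have h1 : 3 * ((3.75:ℝ)/49) / 3.141593 ≤ 3 * (3.75/49) / π := by gcongr
      have h2 : (0.073:ℝ) ≤ 3 * ((3.75:ℝ)/49) / 3.141593 := by norm_num
      linarith
    have hC : (0.15524:ℝ) ≤ (5 - ((7:ℕ):ℝ)) * p5' := by
      push_cast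
      nlinarith [hp5']
    have hquad : (3.141592:ℝ)^2*(4*ρ/3 - ρ^2/9) - (ρ*3.6489 - 0.15524)^2 > 0 := by
      nlinarith [mul_nonneg (sub_nonneg.2 hρ0') (sub_nonneg.2 hρ1)]
    have hcore := CaseTNeg.core (t := t) (ρ := ρ) (C := (5 - ((7:ℕ):ℝ)) * p5')
      (A := Real.arccos (Real.sqrt 5 / 3)) (K := Real.sqrt 3 * (3 + Real.sqrt 5) / 6)
      0.15524 (by linarith) ht1 (by linarith) (by linarith) hC hquad hA0 hA hK0 hKu
    simp only [Ifun, circPerim0, CaseTNeg.Keq, CaseTNeg.p5eq]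
    linarith [hcore]
end
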